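/- Sharpness of sparse recovery under RIP: Let A: ℝⁿ → W be linear, x♮ a k-sparse vector, b = Ax♮, k' > 0, ε > 0. Suppose rip⁺_{k'}(A) ≥ 1 and √(k'/k) · rip⁻_{k+k'}(A)/rip⁺_{k'}(A) ≥ 1 + ε, where for s-sparse vectors z, rip⁻_s(A)‖z‖₂ ≤ ‖Az‖ ≤ rip⁺_s(A)‖z‖₂. Then for all δ ∈ ℝⁿ: ‖x♮ + δ‖₁ + √(k')‖Aδ‖ − ‖x♮‖₁ ≥ (ε/(2+ε))‖δ‖₁. -/

import Mathlib

/-- Selection of the `m` largest entries (in `|v|`) of a finset. -/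
private lemma sel_top {n : ℕ} (v : Fin n → ℝ) :
    ∀ (m : ℕ) (U : Finset (Fin n)), ∃ T ⊆ U, T.card = min m U.card ∧
      ∀ i ∈ U \ T, ∀ j ∈ T, |v i| ≤ |v j| := by
  intro m
  induction m with
  | zero => intro U; exact ⟨∅, Finset.empty_subset _, by simp, by simp⟩
  | succ m ih =>
    intro U
    rcases U.eq_empty_or_nonempty with rfl | hU
    · exact ⟨∅, Finset.empty_subset _, by simp, by simp⟩
    · obtain ⟨j0, hj0U, hj0max⟩ := U.exists_max_image (fun i => |v i|) hU
      obtain ⟨T', hT'U, hT'card, hT'max⟩ := ih (U.erase j0)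
      refine ⟨insert j0 T', ?_, ?_, ?_⟩
      · intro x hx
        rcases Finset.mem_insert.mp hx with rfl | hx
        · exact hj0U
        · exact (Finset.erase_subset _ _) (hT'U hx)
      · have hj0T' : j0 ∉ T' := fun h => (Finset.mem_erase.mp (hT'U h)).1 rfl
        rw [Finset.card_insert_of_notMem hj0T', hT'card,
          Finset.card_erase_of_mem hj0U]
        have h1 : 1 ≤ U.card := Finset.card_pos.mpr hU
        omega
      · intro i hi j hj
        have hiU : i ∈ U := (Finset.mem_sdiff.mp hi).1
        have hiT : i ∉ insert j0 T' := (Finset.mem_sdiff.mp hi).2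
        rcases Finset.mem_insert.mp hj with rfl | hj
        · exact hj0max i hiU
        · have : i ∈ U.erase j0 \ T' := by
            refine Finset.mem_sdiff.mpr ⟨Finset.mem_erase.mpr ⟨?_, hiU⟩, ?_⟩
            · intro h; exact hiT (h ▸ Finset.mem_insert_self _ _)
            · intro h; exact hiT (Finset.mem_insert_of_mem h)
          exact hT'max i this j hj

private lemma restrict_support_card {n : ℕ} (v : Fin n → ℝ) (T : Finset (Fin n)) :
    (Finset.univ.filter fun i => (if i ∈ T then v i else 0) ≠ 0).card ≤ T.card := by
  apply Finset.card_le_card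
  intro i hi
  simp only [Finset.mem_filter] at hi
  by_contra h
  simp [h] at hi

/-- The tail bound: if all entries of `v` on `U` are `≤ t`, then
`‖A (v restricted to U)‖ ≤ ρhi (√k' t + ‖v_U‖₁/√k')`. -/
private lemma tail_bound {n : ℕ} {W : Type*} [NormedAddCommGroup W] [NormedSpace ℝ W]
    (A : (Fin n → ℝ) →ₗ[ℝ] W) (k' : ℕ) (hk' : 0 < k') (ρhi : ℝ) (hρ : 0 ≤ ρhi)
    (hup : ∀ z : Fin n → ℝ, (Finset.univ.filter fun i => z i ≠ 0).card ≤ k' →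
      ‖A z‖ ≤ ρhi * Real.sqrt (∑ i, (z i) ^ 2))
    (v : Fin n → ℝ) :
    ∀ (N : ℕ) (U : Finset (Fin n)), U.card ≤ N → ∀ t, 0 ≤ t → (∀ i ∈ U, |v i| ≤ t) →
      ‖A (fun i => if i ∈ U then v i else 0)‖
        ≤ ρhi * (Real.sqrt k' * t + (∑ i ∈ U, |v i|) / Real.sqrt k') := by
  have hsk' : (0:ℝ) < Real.sqrt k' := Real.sqrt_pos.mpr (by exact_mod_cast hk')
  intro N
  induction N with
  | zero =>
    intro U hcard t ht hbd
    have : U = ∅ := Finset.card_eq_zero.mp (Nat.le_zero.mp hcard)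
    subst this
    have h0 : (fun i : Fin n => if i ∈ (∅ : Finset (Fin n)) then v i else 0) = 0 := by
      funext i; simp
    rw [h0, map_zero, norm_zero]
    simp only [Finset.sum_empty]
    positivity
  | succ N ih =>
    intro U hcard t ht hbd
    obtain ⟨T, hTU, hTcard, hTmax⟩ := sel_top v k' U
    -- bound on the head block T
    have hheadnorm : ‖A (fun i => if i ∈ T then v i else 0)‖ ≤ ρhi * (Real.sqrt k' * t) := by
      refine le_trans (hup _ (le_trans (restrict_support_card v T) ?_)) ?_
      · rw [hTcard]; exact min_le_left _ _
      · have hsum : (∑ i, (if i ∈ T then v i else 0) ^ 2) ≤ (k' : ℝ) * t ^ 2 := by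
          have h1 : (∑ i, (if i ∈ T then v i else 0) ^ 2) = ∑ i ∈ T, v i ^ 2 := by
            rw [← Finset.sum_subset (Finset.subset_univ T) (fun i _ hi => by simp [hi])]
            exact Finset.sum_congr rfl fun i hi => by simp [hi]
          rw [h1]
          calc (∑ i ∈ T, v i ^ 2) ≤ ∑ i ∈ T, t ^ 2 := by
                refine Finset.sum_le_sum fun i hi => ?_
                have := hbd i (hTU hi)
                nlinarith [abs_nonneg (v i), neg_abs_le (v i), le_abs_self (v i)]
            _ = T.card * t ^ 2 := by rw [Finset.sum_const, nsmul_eq_mul]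
            _ ≤ (k' : ℝ) * t ^ 2 := by
                have : T.card ≤ k' := by rw [hTcard]; exact min_le_left _ _
                have : (T.card : ℝ) ≤ k' := by exact_mod_cast this
                nlinarith
        gcongr
        calc Real.sqrt (∑ i, (if i ∈ T then v i else 0) ^ 2)
            ≤ Real.sqrt ((k':ℝ) * t ^ 2) := Real.sqrt_le_sqrt hsum
          _ = Real.sqrt k' * t := by
              rw [Real.sqrt_mul (by positivity), Real.sqrt_sq ht]
    by_cases hbig : k' ≤ U.card
    · -- T has exactly k' elements
      have hTk' : T.card = k' := by rw [hTcard]; omega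
      -- split
      have hsplit : (fun i => if i ∈ U then v i else 0)
          = (fun i => if i ∈ T then v i else 0) + (fun i => if i ∈ U \ T then v i else 0) := by
        funext i
        by_cases hiT : i ∈ T
        · simp [hiT, hTU hiT, Pi.add_apply]
        · by_cases hiU : i ∈ U <;> simp [hiT, hiU, Pi.add_apply]
      set t' : ℝ := (∑ j ∈ T, |v j|) / k' with ht'def
      have ht'0 : 0 ≤ t' := by positivity
      have hbd' : ∀ i ∈ U \ T, |v i| ≤ t' := by
        intro i hi
        have h1 : ∀ j ∈ T, |v i| ≤ |v j| := hTmax i hi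
        have h2 : (T.card : ℝ) * |v i| ≤ ∑ j ∈ T, |v j| := by
          calc (T.card : ℝ) * |v i| = ∑ _j ∈ T, |v i| := by
                rw [Finset.sum_const, nsmul_eq_mul]
            _ ≤ ∑ j ∈ T, |v j| := Finset.sum_le_sum h1
        rw [ht'def, le_div_iff₀ (by exact_mod_cast hk')]
        rw [hTk'] at h2; linarith [h2]
      have hcard' : (U \ T).card ≤ N := by
        have := Finset.card_sdiff_add_card_eq_card hTU
        omega
      have htail := ih (U \ T) hcard' t' ht'0 hbd'
      have hkey : Real.sqrt k' * t' = (∑ j ∈ T, |v j|) / Real.sqrt k' := by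
        have hss : Real.sqrt k' * Real.sqrt k' = (k':ℝ) := Real.mul_self_sqrt (by positivity)
        have hk'0 : (k':ℝ) ≠ 0 := by positivity
        rw [ht'def, eq_div_iff (ne_of_gt hsk')]
        field_simp
        linear_combination (∑ j ∈ T, |v j|) * hss
      calc ‖A (fun i => if i ∈ U then v i else 0)‖
          ≤ ‖A (fun i => if i ∈ T then v i else 0)‖
            + ‖A (fun i => if i ∈ U \ T then v i else 0)‖ := by
            rw [hsplit, map_add]; exact norm_add_le _ _
        _ ≤ ρhi * (Real.sqrt k' * t)
            + ρhi * (Real.sqrt k' * t' + (∑ i ∈ U \ T, |v i|) / Real.sqrt k') := by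
            gcongr
        _ = ρhi * (Real.sqrt k' * t
            + ((∑ j ∈ T, |v j|) + ∑ i ∈ U \ T, |v i|) / Real.sqrt k') := by
            rw [hkey]; ring
        _ = ρhi * (Real.sqrt k' * t + (∑ i ∈ U, |v i|) / Real.sqrt k') := by
            congr 2
            rw [add_comm, Finset.sum_sdiff hTU]
    · -- U has fewer than k' elements: T = U
      push_neg at hbig
      have hTU' : T = U := by
        apply Finset.eq_of_subset_of_card_le hTU
        rw [hTcard]; omega
      subst hTU'
      calc ‖A (fun i => if i ∈ T then v i else 0)‖ ≤ ρhi * (Real.sqrt k' * t) := hheadnorm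
        _ ≤ ρhi * (Real.sqrt k' * t + (∑ i ∈ T, |v i|) / Real.sqrt k') := by
            have : 0 ≤ (∑ i ∈ T, |v i|) / Real.sqrt k' := by positivity
            nlinarith

private lemma key_alg (a Q B D sk sk' ρlo ρhi ε : ℝ)
    (hρlo : 0 < ρlo) (hρhi : 1 ≤ ρhi) (hsk : 0 ≤ sk) (hε : 0 ≤ ε)
    (hB : 0 ≤ B) (hD : 0 ≤ D)
    (h12 : a ≤ sk * Q) (h2 : ρlo * Q ≤ B + ρhi * D)
    (hcoef : (1 + ε) * sk * ρhi ≤ sk' * ρlo) :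
    (1 + ε) * a ≤ sk' * D + sk' * B := by
  have hρhi0 : 0 < ρhi := by linarith
  have P1 : (1 + ε) * sk * (ρlo * Q) ≤ (1 + ε) * sk * (B + ρhi * D) :=
    mul_le_mul_of_nonneg_left h2 (mul_nonneg (by linarith) hsk)
  have P2 : (1 + ε) * sk * ρhi * D ≤ sk' * ρlo * D :=
    mul_le_mul_of_nonneg_right hcoef hD
  have P3 : (1 + ε) * sk * ρhi * B ≤ sk' * ρlo * B :=
    mul_le_mul_of_nonneg_right hcoef hB
  have P4 : (1 + ε) * ρlo * a ≤ (1 + ε) * ρlo * (sk * Q) :=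
    mul_le_mul_of_nonneg_left h12 (mul_nonneg (by linarith) hρlo.le)
  have P5 : (1 + ε) * sk * B ≤ (1 + ε) * sk * ρhi * B := by
    nlinarith [mul_nonneg (mul_nonneg (by linarith : (0:ℝ) ≤ 1 + ε) hsk) hB]
  nlinarith [hρlo, P1, P2, P3, P4, P5]

private lemma final_alg (a b M ε : ℝ) (ha : 0 ≤ a) (hb : 0 ≤ b) (hM : 0 ≤ M)
    (hε : 0 < ε) (hkey : (1 + ε) * a ≤ b + M) :
    ε / (2 + ε) * (a + b) ≤ b - a + M := by
  have h2ε : (0:ℝ) < 2 + ε := by linarith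
  rw [div_mul_eq_mul_div, div_le_iff₀ h2ε]
  nlinarith [mul_nonneg hε.le hM]

theorem sparse_recovery_sharp_of_rip
    {n : ℕ} {W : Type*} [NormedAddCommGroup W] [NormedSpace ℝ W]
    (A : (Fin n → ℝ) →ₗ[ℝ] W)
    (x0 : Fin n → ℝ) (k k' : ℕ) (hk' : 0 < k')
    (hx0 : (Finset.univ.filter fun i => x0 i ≠ 0).card ≤ k)
    (ε ρlo ρhi : ℝ) (hε : 0 < ε) (hρhi : 1 ≤ ρhi)
    (hup : ∀ z : Fin n → ℝ, (Finset.univ.filter fun i => z i ≠ 0).card ≤ k' →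
      ‖A z‖ ≤ ρhi * Real.sqrt (∑ i, (z i) ^ 2))
    (hlo : ∀ z : Fin n → ℝ, (Finset.univ.filter fun i => z i ≠ 0).card ≤ k + k' →
      ρlo * Real.sqrt (∑ i, (z i) ^ 2) ≤ ‖A z‖)
    (hratio : Real.sqrt ((k' : ℝ) / k) * (ρlo / ρhi) ≥ 1 + ε) :
    ∀ δ : Fin n → ℝ,
      (∑ i, |x0 i + δ i|) + Real.sqrt (k' : ℝ) * ‖A δ‖ - (∑ i, |x0 i|)
        ≥ ε / (2 + ε) * ∑ i, |δ i| := by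
  intro δ
  classical
  set S : Finset (Fin n) := Finset.univ.filter (fun i => x0 i ≠ 0) with hSdef
  -- basic positivity facts
  have hk0 : k ≠ 0 := by
    rintro rfl
    rw [Nat.cast_zero, div_zero, Real.sqrt_zero, zero_mul] at hratio
    linarith
  have hkpos : (0:ℝ) < k := by exact_mod_cast Nat.pos_of_ne_zero hk0
  have hk'pos : (0:ℝ) < k' := by exact_mod_cast hk'
  have hρhi0 : (0:ℝ) < ρhi := by linarith
  have hsk'pos : (0:ℝ) < Real.sqrt k' := Real.sqrt_pos.mpr hk'pos
  have hρlo0 : (0:ℝ) < ρlo := by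
    by_contra h
    push_neg at h
    have h2 : Real.sqrt ((k':ℝ)/k) * (ρlo/ρhi) ≤ 0 :=
      mul_nonpos_of_nonneg_of_nonpos (Real.sqrt_nonneg _)
        (div_nonpos_iff.mpr (Or.inr ⟨h, hρhi0.le⟩))
    linarith
  -- select the k' largest entries of δ outside S
  obtain ⟨T, hTSc, hTcard, hTmax⟩ := sel_top δ k' Sᶜ
  set w : Fin n → ℝ := fun i => if i ∈ S ∪ T then δ i else 0 with hwdef
  set u : Fin n → ℝ := fun i => if i ∈ Sᶜ \ T then δ i else 0 with hudef
  have hδsplit : δ = w + u := by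
    funext i
    simp only [hwdef, hudef, Pi.add_apply, Finset.mem_union, Finset.mem_sdiff,
      Finset.mem_compl]
    by_cases hiS : i ∈ S <;> by_cases hiT : i ∈ T <;> simp [hiS, hiT]
  -- lower RIP applied to w
  have hTk'le : T.card ≤ k' := by rw [hTcard]; exact min_le_left _ _
  have hwcard : (Finset.univ.filter fun i => w i ≠ 0).card ≤ k + k' := by
    simp only [hwdef]
    refine le_trans (le_trans (restrict_support_card δ (S ∪ T)) (Finset.card_union_le _ _)) ?_
    omega
  have hloww : ρlo * Real.sqrt (∑ i, w i ^ 2) ≤ ‖A w‖ := hlo w hwcard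
  -- upper bound on ‖A u‖
  have hu : ‖A u‖ ≤ ρhi * ((∑ i ∈ Sᶜ, |δ i|) / Real.sqrt k') := by
    by_cases hbig : k' ≤ (Sᶜ : Finset (Fin n)).card
    · have hTk' : T.card = k' := by rw [hTcard]; omega
      set t' : ℝ := (∑ j ∈ T, |δ j|) / k' with ht'def
      have hbd' : ∀ i ∈ Sᶜ \ T, |δ i| ≤ t' := by
        intro i hi
        have h2 : (T.card : ℝ) * |δ i| ≤ ∑ j ∈ T, |δ j| := by
          calc (T.card : ℝ) * |δ i| = ∑ _j ∈ T, |δ i| := by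
                rw [Finset.sum_const, nsmul_eq_mul]
            _ ≤ ∑ j ∈ T, |δ j| := Finset.sum_le_sum (hTmax i hi)
        rw [ht'def, le_div_iff₀ hk'pos]
        rw [hTk'] at h2; linarith
      have htail := tail_bound A k' hk' ρhi hρhi0.le hup δ (Sᶜ \ T).card (Sᶜ \ T)
        le_rfl t' (by positivity) hbd'
      have hkey : Real.sqrt k' * t' = (∑ j ∈ T, |δ j|) / Real.sqrt k' := by
        have hss : Real.sqrt k' * Real.sqrt k' = (k':ℝ) := Real.mul_self_sqrt hk'pos.le
        rw [ht'def, eq_div_iff (ne_of_gt hsk'pos)]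
        field_simp
        linear_combination (∑ j ∈ T, |δ j|) * hss
      calc ‖A u‖ ≤ ρhi * (Real.sqrt k' * t' + (∑ i ∈ Sᶜ \ T, |δ i|) / Real.sqrt k') := by
            rw [hudef]; exact htail
        _ = ρhi * (((∑ j ∈ T, |δ j|) + ∑ i ∈ Sᶜ \ T, |δ i|) / Real.sqrt k') := by
            rw [hkey]; ring
        _ = ρhi * ((∑ i ∈ Sᶜ, |δ i|) / Real.sqrt k') := by
            rw [add_comm, Finset.sum_sdiff hTSc]
    · push_neg at hbig
      have hTall : T = Sᶜ := Finset.eq_of_subset_of_card_le hTSc (by rw [hTcard]; omega)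
      have hu0 : u = 0 := by
        funext i; rw [hudef]; simp [hTall]
      rw [hu0, map_zero, norm_zero]
      exact mul_nonneg hρhi0.le (div_nonneg (by positivity) hsk'pos.le)
  -- ‖A w‖ ≤ ‖A δ‖ + ‖A u‖
  have hAw : ‖A w‖ ≤ ‖A δ‖ + ‖A u‖ := by
    have h1 : A w = A δ - A u := by rw [hδsplit, map_add]; abel
    rw [h1]
    exact norm_sub_le _ _
  -- ℓ¹–ℓ² bound on S
  have hS12 : (∑ i ∈ S, |δ i|) ≤ Real.sqrt k * Real.sqrt (∑ i, w i ^ 2) := by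
    have h1 : (∑ i ∈ S, |δ i|) ^ 2 ≤ (S.card : ℝ) * ∑ i ∈ S, |δ i| ^ 2 := by
      exact sq_sum_le_card_mul_sum_sq
    have h2 : (∑ i ∈ S, |δ i| ^ 2) ≤ ∑ i, w i ^ 2 := by
      have e1 : (∑ i ∈ S, |δ i| ^ 2) = ∑ i ∈ S, w i ^ 2 := by
        refine Finset.sum_congr rfl fun i hi => ?_
        simp only [hwdef]
        simp [Finset.mem_union_left T hi, sq_abs]
      rw [e1]
      refine Finset.sum_le_sum_of_subset_of_nonneg (Finset.subset_univ S)
        fun i _ _ => by positivity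
    have h3 : (∑ i ∈ S, |δ i|) ^ 2 ≤ (k : ℝ) * ∑ i, w i ^ 2 := by
      have hcard : (S.card : ℝ) ≤ (k : ℝ) := by exact_mod_cast hx0
      have hnn : (0:ℝ) ≤ ∑ i ∈ S, |δ i| ^ 2 := by positivity
      nlinarith
    calc (∑ i ∈ S, |δ i|) = Real.sqrt ((∑ i ∈ S, |δ i|) ^ 2) :=
          (Real.sqrt_sq (by positivity)).symm
      _ ≤ Real.sqrt ((k : ℝ) * ∑ i, w i ^ 2) := Real.sqrt_le_sqrt h3
      _ = Real.sqrt k * Real.sqrt (∑ i, w i ^ 2) := Real.sqrt_mul hkpos.le _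
  -- coefficient inequality from the ratio hypothesis
  have hcoef : (1 + ε) * Real.sqrt k * ρhi ≤ Real.sqrt k' * ρlo := by
    have hs : Real.sqrt ((k':ℝ)/k) * Real.sqrt k = Real.sqrt k' := by
      rw [← Real.sqrt_mul (by positivity)]
      congr 1
      field_simp
    calc (1 + ε) * Real.sqrt k * ρhi = (1 + ε) * (Real.sqrt k * ρhi) := by ring
      _ ≤ (Real.sqrt ((k':ℝ)/k) * (ρlo/ρhi)) * (Real.sqrt k * ρhi) :=
          mul_le_mul_of_nonneg_right hratio (mul_nonneg (Real.sqrt_nonneg _) hρhi0.le)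
      _ = (Real.sqrt ((k':ℝ)/k) * Real.sqrt k) * (ρlo/ρhi * ρhi) := by ring
      _ = Real.sqrt k' * ρlo := by rw [hs, div_mul_cancel₀ _ (ne_of_gt hρhi0)]
  -- key inequality
  have hB : (0:ℝ) ≤ ‖A δ‖ := norm_nonneg _
  have hC : (0:ℝ) ≤ ∑ i ∈ Sᶜ, |δ i| := by positivity
  have hkey : (1 + ε) * (∑ i ∈ S, |δ i|) ≤ (∑ i ∈ Sᶜ, |δ i|) + Real.sqrt k' * ‖A δ‖ := by
    have hD0 : 0 ≤ (∑ i ∈ Sᶜ, |δ i|) / Real.sqrt k' := div_nonneg hC hsk'pos.le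
    have hCD : (∑ i ∈ Sᶜ, |δ i|) = Real.sqrt k' * ((∑ i ∈ Sᶜ, |δ i|) / Real.sqrt k') := by
      field_simp
    have h2 : ρlo * Real.sqrt (∑ i, w i ^ 2)
        ≤ ‖A δ‖ + ρhi * ((∑ i ∈ Sᶜ, |δ i|) / Real.sqrt k') := by
      calc ρlo * Real.sqrt (∑ i, w i ^ 2) ≤ ‖A w‖ := hloww
        _ ≤ ‖A δ‖ + ‖A u‖ := hAw
        _ ≤ _ := by linarith [hu]
    have := key_alg (∑ i ∈ S, |δ i|) (Real.sqrt (∑ i, w i ^ 2)) (‖A δ‖)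
      ((∑ i ∈ Sᶜ, |δ i|) / Real.sqrt k') (Real.sqrt k) (Real.sqrt k') ρlo ρhi ε
      hρlo0 hρhi (Real.sqrt_nonneg _) hε.le hB hD0 hS12 h2 hcoef
    calc (1 + ε) * (∑ i ∈ S, |δ i|)
        ≤ Real.sqrt k' * ((∑ i ∈ Sᶜ, |δ i|) / Real.sqrt k') + Real.sqrt k' * ‖A δ‖ := this
      _ = (∑ i ∈ Sᶜ, |δ i|) + Real.sqrt k' * ‖A δ‖ := by rw [← hCD]
  -- triangle inequality part
  have hsum_split : (∑ i, |δ i|) = (∑ i ∈ S, |δ i|) + ∑ i ∈ Sᶜ, |δ i| :=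
    (Finset.sum_add_sum_compl S _).symm
  have htri : (∑ i, |x0 i + δ i|) - (∑ i, |x0 i|)
      ≥ (∑ i ∈ Sᶜ, |δ i|) - ∑ i ∈ S, |δ i| := by
    have h1 : ∀ i ∈ Sᶜ, |x0 i + δ i| - |x0 i| = |δ i| := by
      intro i hi
      have hx : x0 i = 0 := by
        have := Finset.mem_compl.mp hi
        simpa [hSdef] using this
      simp [hx]
    have h2 : ∀ i ∈ S, -|δ i| ≤ |x0 i + δ i| - |x0 i| := by
      intro i _
      have h3 := abs_sub_abs_le_abs_sub (x0 i) (x0 i + δ i)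
      have h4 : x0 i - (x0 i + δ i) = -δ i := by ring
      rw [h4, abs_neg] at h3
      linarith
    have e1 : (∑ i, |x0 i + δ i|) - (∑ i, |x0 i|) = ∑ i, (|x0 i + δ i| - |x0 i|) := by
      rw [Finset.sum_sub_distrib]
    rw [e1, ← Finset.sum_add_sum_compl S (fun i => |x0 i + δ i| - |x0 i|)]
    have e2 : (∑ i ∈ Sᶜ, (|x0 i + δ i| - |x0 i|)) = ∑ i ∈ Sᶜ, |δ i| :=
      Finset.sum_congr rfl h1
    have e3 : (∑ i ∈ S, -|δ i|) ≤ ∑ i ∈ S, (|x0 i + δ i| - |x0 i|) :=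
      Finset.sum_le_sum h2
    have e4 : (∑ i ∈ S, -|δ i|) = -∑ i ∈ S, |δ i| := Finset.sum_neg_distrib _
    rw [e2]
    linarith
  -- conclude
  have hM : (0:ℝ) ≤ Real.sqrt k' * ‖A δ‖ := by positivity
  have ha : (0:ℝ) ≤ ∑ i ∈ S, |δ i| := by positivity
  have hfin := final_alg (∑ i ∈ S, |δ i|) (∑ i ∈ Sᶜ, |δ i|) (Real.sqrt k' * ‖A δ‖)
    ε ha hC hM hε hkey
  rw [hsum_split]
  linarith
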